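/- Let Y_0 and Z_0 = Y_0 Y_0^T be as defined, where (Y_0)_{ij} = 0 if i < j, 1 if i = j, and 1 if i > j with i+j odd, 0 otherwise. Then the sign of (Z_0^{-1})_{ij} is (-1)^{i-j} for all 1 ≤ i, j ≤ n; in particular every diagonal entry of Z_0^{-1} is positive. -/

import Mathlib

open Matrix

noncomputable def cc (d : ℕ) : ℝ := if d = 0 then 1 else (Nat.fib d : ℝ)

lemma cc_pos (d : ℕ) : 0 < cc d := by
  unfold cc; split
  · norm_num
  · exact_mod_cast Nat.fib_pos.mpr (Nat.pos_of_ne_zero ‹_›)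

noncomputable def Sf (d : ℕ) : ℝ :=
  ∑ e ∈ Finset.range d, if (d - e) % 2 = 1 then cc e else 0

lemma Sf_step (d : ℕ) : Sf (d + 2) = Sf d + (Nat.fib (d + 1) : ℝ) := by
  unfold Sf
  rw [Finset.sum_range_succ, Finset.sum_range_succ]
  have h1 : (d + 2 - (d + 1)) % 2 = 1 := by omega
  have h2 : ¬ ((d + 2 - d) % 2 = 1) := by omega
  rw [if_pos h1, if_neg h2, add_zero]
  have hc : cc (d + 1) = (Nat.fib (d + 1) : ℝ) := by unfold cc; rw [if_neg (by omega)]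
  rw [hc]
  congr 1
  refine Finset.sum_congr rfl fun e he => ?_
  have := Finset.mem_range.mp he
  have hp : (d + 2 - e) % 2 = (d - e) % 2 := by omega
  rw [hp]

lemma Sf_eq : ∀ d : ℕ, d ≠ 0 → Sf d = (Nat.fib d : ℝ) := by
  intro d
  induction d using Nat.strong_induction_on with
  | _ d ih =>
    match d with
    | 0 => intro h; exact absurd rfl h
    | 1 => intro _; unfold Sf; simp [cc]
    | 2 => intro _; unfold Sf; simp [Finset.sum_range_succ, cc]
    | (d + 3) =>
      intro _
      have := Sf_step (d + 1)
      rw [show d + 3 = d + 1 + 2 by ring, this, ih (d + 1) (by omega) (by omega)]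
      push_cast [show d + 1 + 2 = (d+1) + 2 by ring, Nat.fib_add_two]
      ring

lemma negpow (a b : ℕ) (h : a % 2 = b % 2) : (-1 : ℝ) ^ a = (-1) ^ b := by
  conv_lhs => rw [← Nat.div_add_mod a 2]
  conv_rhs => rw [← Nat.div_add_mod b 2]
  rw [h, pow_add, pow_add, pow_mul, pow_mul]
  norm_num

noncomputable def Mm (n : ℕ) : Matrix (Fin n) (Fin n) ℝ :=
  Matrix.of fun i j =>
    if (j : ℕ) ≤ (i : ℕ) then (-1) ^ ((i : ℕ) - (j : ℕ)) * cc ((i : ℕ) - (j : ℕ)) else 0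

lemma YM (n : ℕ) (Y₀ : Matrix (Fin n) (Fin n) ℝ)
    (hY₀ : ∀ i j : Fin n, Y₀ i j =
      if i < j then 0 else if i = j then 1 else
        if (i : ℕ) % 2 ≠ (j : ℕ) % 2 then 1 else 0) :
    Y₀ * Mm n = 1 := by
  ext i j
  rw [Matrix.mul_apply]
  set a : ℕ := (j : ℕ) with ha
  set b : ℕ := (i : ℕ) with hb
  -- the summand as a function of a natural number
  set F : ℕ → ℝ := fun m =>
    (if b < m then 0 else if b = m then 1 else if b % 2 ≠ m % 2 then (1:ℝ) else 0) *
    (if a ≤ m then (-1) ^ (m - a) * cc (m - a) else 0) with hF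
  have hterm : ∀ k : Fin n, Y₀ i k * Mm n k j = F (k : ℕ) := by
    intro k
    rw [hY₀, hF]
    simp only [Mm, Matrix.of_apply, Fin.lt_def, ← Fin.val_eq_val]
    rfl
  have hsum : ∑ k : Fin n, Y₀ i k * Mm n k j = ∑ m ∈ Finset.range n, F m := by
    rw [Finset.sum_congr rfl fun k _ => hterm k]
    exact Fin.sum_univ_eq_sum_range F n
  rw [hsum]
  rcases lt_trichotomy b a with hlt | heq | hgt
  · -- i < j : everything vanishes
    have h0 : (1 : Matrix (Fin n) (Fin n) ℝ) i j = 0 :=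
      Matrix.one_apply_ne (by rw [Fin.ne_iff_vne]; omega)
    rw [h0]
    refine Finset.sum_eq_zero fun m _ => ?_
    rw [hF]
    rcases le_or_gt a m with h1 | h1
    · have : b < m := by omega
      simp [this]
    · simp [h1]
  · -- i = j : single surviving term
    have hij : i = j := by rw [Fin.ext_iff]; omega
    rw [hij, Matrix.one_apply_eq]
    have hbmem : b ∈ Finset.range n := Finset.mem_range.mpr i.isLt
    rw [Finset.sum_eq_single_of_mem b hbmem]
    · rw [hF]
      simp only [lt_irrefl, if_false, if_neg (lt_irrefl b), if_pos rfl, if_pos (le_of_eq heq.symm)]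
      rw [show b - a = 0 by omega]
      simp [cc]
    · intro m _ hm
      rw [hF]
      rcases lt_trichotomy b m with h1 | h1 | h1
      · simp [h1]
      · omega
      · have : ¬ a ≤ m := by omega
        simp [this]
  · -- j < i : the Fibonacci identity
    have h0 : (1 : Matrix (Fin n) (Fin n) ℝ) i j = 0 :=
      Matrix.one_apply_ne (by rw [Fin.ne_iff_vne]; omega)
    rw [h0]
    set d : ℕ := b - a with hd
    have hd1 : 1 ≤ d := by omega
    have hsub : ∑ m ∈ Finset.range n, F m = ∑ m ∈ Finset.Icc a b, F m := by
      refine (Finset.sum_subset ?_ ?_).symm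
      · intro m hm
        have := Finset.mem_Icc.mp hm
        exact Finset.mem_range.mpr (by have := i.isLt; omega)
      · intro m _ hm
        rw [Finset.mem_Icc] at hm
        push_neg at hm
        rw [hF]
        rcases le_or_gt a m with h1 | h1
        · have : b < m := hm h1
          simp [this]
        · simp [h1]
    rw [hsub, ← Finset.Ico_add_one_right_eq_Icc, Finset.sum_Ico_eq_sum_range, show b + 1 - a = d + 1 by omega,
      Finset.sum_range_succ]
    have hlast : F (a + d) = (-1) ^ d * cc d := by
      rw [hF]
      have h1 : ¬ b < a + d := by omega
      have h2 : b = a + d := by omega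
      simp [h1, h2]
    have hrest : ∀ e ∈ Finset.range d,
        F (a + e) = (-(-1 : ℝ) ^ d) * (if (d - e) % 2 = 1 then cc e else 0) := by
      intro e he
      have hed := Finset.mem_range.mp he
      rw [hF]
      have h1 : ¬ b < a + e := by omega
      have h2 : ¬ b = a + e := by omega
      have h3 : a ≤ a + e := by omega
      have h4 : a + e - a = e := by omega
      beta_reduce
      rw [if_neg h1, if_neg h2, if_pos h3, h4]
      by_cases hp : b % 2 ≠ (a + e) % 2
      · have hp2 : (d - e) % 2 = 1 := by omega
        rw [if_pos hp, if_pos hp2, one_mul]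
        have : (-1 : ℝ) ^ e = (-1) ^ (d + 1) := negpow e (d + 1) (by omega)
        rw [this, pow_succ]
        ring
      · have hp2 : ¬ (d - e) % 2 = 1 := by omega
        rw [if_neg hp, if_neg hp2, zero_mul, mul_zero]
    rw [Finset.sum_congr rfl hrest, ← Finset.mul_sum, hlast]
    have hS : ∑ e ∈ Finset.range d, (if (d - e) % 2 = 1 then cc e else 0) = (Nat.fib d : ℝ) :=
      Sf_eq d (by omega)
    have hcd : cc d = (Nat.fib d : ℝ) := by unfold cc; rw [if_neg (by omega)]
    rw [hS, hcd]
    ring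

lemma entry (n : ℕ) (i j : Fin n) : ∃ T : ℝ, 0 < T ∧
    ((Mm n)ᵀ * Mm n) i j = (-1) ^ ((i : ℕ) + (j : ℕ)) * T := by
  refine ⟨∑ t : Fin n,
    (if (i : ℕ) ≤ (t : ℕ) ∧ (j : ℕ) ≤ (t : ℕ) then cc (t - i) * cc (t - j) else 0), ?_, ?_⟩
  · refine Finset.sum_pos' (fun t _ => ?_) ?_
    · split
      · exact le_of_lt (mul_pos (cc_pos _) (cc_pos _))
      · exact le_refl 0
    · refine ⟨max i j, Finset.mem_univ _, ?_⟩
      have h1 : (i : ℕ) ≤ ((max i j : Fin n) : ℕ) ∧ (j : ℕ) ≤ ((max i j : Fin n) : ℕ) := by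
        constructor
        · exact_mod_cast Fin.le_iff_val_le_val.mp (le_max_left i j)
        · exact_mod_cast Fin.le_iff_val_le_val.mp (le_max_right i j)
      rw [if_pos h1]
      exact mul_pos (cc_pos _) (cc_pos _)
  · rw [Matrix.mul_apply, Finset.mul_sum]
    refine Finset.sum_congr rfl fun t _ => ?_
    simp only [Mm, Matrix.transpose_apply, Matrix.of_apply]
    by_cases h : (i : ℕ) ≤ (t : ℕ) ∧ (j : ℕ) ≤ (t : ℕ)
    · rw [if_pos h.1, if_pos h.2, if_pos h]
      have hp : (-1 : ℝ) ^ ((t : ℕ) - i) * (-1) ^ ((t : ℕ) - j)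
          = (-1) ^ ((i : ℕ) + (j : ℕ)) := by
        rw [← pow_add]
        exact negpow _ _ (by omega)
      calc (-1 : ℝ) ^ ((t : ℕ) - i) * cc ((t : ℕ) - i) * ((-1) ^ ((t : ℕ) - j) * cc ((t : ℕ) - j))
          = ((-1 : ℝ) ^ ((t : ℕ) - i) * (-1) ^ ((t : ℕ) - j)) * (cc ((t : ℕ) - i) * cc ((t : ℕ) - j)) := by ring
        _ = (-1) ^ ((i : ℕ) + (j : ℕ)) * (cc ((t : ℕ) - i) * cc ((t : ℕ) - j)) := by rw [hp]
    · rw [if_neg h, mul_zero]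
      rcases not_and_or.mp h with h1 | h1
      · rw [if_neg h1, zero_mul]
      · rw [if_neg h1, mul_zero]


/-- The sign of `(Z₀⁻¹)_{ij}` is `(-1)^{i-j}`; in particular the diagonal
entries of `Z₀⁻¹` are positive. -/
theorem stmt_9 (n : ℕ)
    (Y₀ : Matrix (Fin n) (Fin n) ℝ)
    (hY₀ : ∀ i j : Fin n, Y₀ i j =
      if i < j then 0 else if i = j then 1 else
        if (i : ℕ) % 2 ≠ (j : ℕ) % 2 then 1 else 0)
    (Z₀ : Matrix (Fin n) (Fin n) ℝ) (hZ₀ : Z₀ = Y₀ * Y₀ᵀ) :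
    (∀ i j : Fin n, Real.sign (Z₀⁻¹ i j) = (-1 : ℝ) ^ ((i : ℕ) + (j : ℕ))) ∧
    (∀ i : Fin n, 0 < Z₀⁻¹ i i) := by
  have hYinv : Y₀⁻¹ = Mm n := Matrix.inv_eq_right_inv (YM n Y₀ hY₀)
  have hZinv : Z₀⁻¹ = (Mm n)ᵀ * Mm n := by
    rw [hZ₀, Matrix.mul_inv_rev, ← Matrix.transpose_nonsing_inv, hYinv]
  have key : ∀ i j : Fin n, ∃ T : ℝ, 0 < T ∧
      Z₀⁻¹ i j = (-1) ^ ((i : ℕ) + (j : ℕ)) * T := by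
    intro i j
    rw [hZinv]
    exact entry n i j
  constructor
  · intro i j
    obtain ⟨T, hT, hE⟩ := key i j
    rw [hE]
    rcases Nat.even_or_odd ((i : ℕ) + (j : ℕ)) with hpar | hpar
    · rw [hpar.neg_one_pow, one_mul]
      exact Real.sign_of_pos hT
    · rw [hpar.neg_one_pow, neg_one_mul]
      rw [Real.sign_of_neg (by linarith)]
  · intro i
    obtain ⟨T, hT, hE⟩ := key i i
    rw [hE, (Even.add_self ((i : ℕ))).neg_one_pow, one_mul]
    exact hT
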